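/- Let u be a C³ function on an open set Ω ⊆ ℝⁿ satisfying the quasilinear equation Σ_{ij} a_{ij}(∇u)∂ᵢ∂ⱼu = 0, where a_{ij}(p) = F'(|p|²)δ_{ij} + 2F''(|p|²)pᵢpⱼ for a C³ function F. Then w(x) = ⟨∇u(x), x⟩ − u(x) satisfies Σ_{ij} a_{ij}(∇u)∂ᵢ∂ⱼw = ⟨b, ∇w⟩, where b = −2{[F''(|∇u|²)Δu + 2F'''(|∇u|²)⟨D²u·∇u, ∇u⟩]·∇u + 2F''(|∇u|²)·D²u·∇u}. -/

import Mathlib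

open RealInnerProductSpace

/-- First partial derivative `∂ᵢ u`. -/
noncomputable def pd {n : ℕ} (i : Fin n) (u : EuclideanSpace ℝ (Fin n) → ℝ)
    (x : EuclideanSpace ℝ (Fin n)) : ℝ :=
  fderiv ℝ u x (EuclideanSpace.single i 1)

/-- Second partial derivative `∂ᵢ∂ⱼ u`. -/
noncomputable def pd2 {n : ℕ} (i j : Fin n) (u : EuclideanSpace ℝ (Fin n) → ℝ)
    (x : EuclideanSpace ℝ (Fin n)) : ℝ :=
  pd i (pd j u) x

/-- The Laplacian of `u` at `x`. -/
noncomputable def lap {n : ℕ} (u : EuclideanSpace ℝ (Fin n) → ℝ)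
    (x : EuclideanSpace ℝ (Fin n)) : ℝ :=
  ∑ i : Fin n, pd2 i i u x

section helpers
variable {n : ℕ}

lemma inner_grad (u : EuclideanSpace ℝ (Fin n) → ℝ) (y v : EuclideanSpace ℝ (Fin n)) :
    ⟪gradient u y, v⟫ = fderiv ℝ u y v := InnerProductSpace.toDual_symm_apply

lemma grad_comp (u : EuclideanSpace ℝ (Fin n) → ℝ) (y : EuclideanSpace ℝ (Fin n)) (i : Fin n) :
    gradient u y i = pd i u y := by
  rw [pd, ← inner_grad, real_inner_comm, EuclideanSpace.inner_single_left]
  simp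

lemma apply_eq_sum (L : EuclideanSpace ℝ (Fin n) →L[ℝ] ℝ) (y : EuclideanSpace ℝ (Fin n)) :
    L y = ∑ m, y m * L (EuclideanSpace.single m 1) := by
  have : y = ∑ m, y m • EuclideanSpace.single m 1 := by
    ext j; rw [WithLp.ofLp_sum, Finset.sum_apply]; simp [EuclideanSpace.single_apply]
  conv_lhs => rw [this]
  simp

lemma inner_sum' (v w : EuclideanSpace ℝ (Fin n)) : ⟪v, w⟫ = ∑ m, v m * w m := by
  simp [PiLp.inner_apply, RCLike.inner_apply]
  exact Finset.sum_congr rfl fun _ _ => mul_comm _ _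

lemma normsq_eq (u : EuclideanSpace ℝ (Fin n) → ℝ) (y : EuclideanSpace ℝ (Fin n)) :
    ‖gradient u y‖ ^ 2 = ∑ l, pd l u y * pd l u y := by
  rw [← real_inner_self_eq_norm_sq, inner_sum']
  exact Finset.sum_congr rfl fun i _ => by rw [grad_comp]

lemma grad_eq_sum_pd (u : EuclideanSpace ℝ (Fin n) → ℝ) :
    gradient u = fun y => ∑ i, pd i u y • EuclideanSpace.single i 1 := by
  funext y; ext j
  rw [grad_comp, WithLp.ofLp_sum, Finset.sum_apply]
  simp [EuclideanSpace.single_apply]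

lemma hasFDerivAt_gradient {u : EuclideanSpace ℝ (Fin n) → ℝ} {x : EuclideanSpace ℝ (Fin n)}
    (hd : ∀ i, DifferentiableAt ℝ (pd i u) x) :
    HasFDerivAt (gradient u)
      (∑ i, (fderiv ℝ (pd i u) x).smulRight (EuclideanSpace.single i 1)) x := by
  rw [grad_eq_sum_pd]
  exact HasFDerivAt.fun_sum fun i _ => ((hd i).hasFDerivAt).smul_const (EuclideanSpace.single i (1:ℝ))

lemma fderiv_gradient_apply {u : EuclideanSpace ℝ (Fin n) → ℝ} {x : EuclideanSpace ℝ (Fin n)}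
    (hd : ∀ i, DifferentiableAt ℝ (pd i u) x) (v : EuclideanSpace ℝ (Fin n)) (m : Fin n) :
    (fderiv ℝ (gradient u) x v) m = fderiv ℝ (pd m u) x v := by
  rw [(hasFDerivAt_gradient hd).fderiv]
  rw [ContinuousLinearMap.sum_apply, WithLp.ofLp_sum, Finset.sum_apply]
  simp [EuclideanSpace.single_apply]

lemma sum2_add (f g : Fin n → Fin n → ℝ) :
    ∑ i, ∑ j, (f i j + g i j) = (∑ i, ∑ j, f i j) + ∑ i, ∑ j, g i j := by
  simp [Finset.sum_add_distrib]

lemma sum2_cmul (c : ℝ) (f : Fin n → Fin n → ℝ) :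
    ∑ i, ∑ j, c * f i j = c * ∑ i, ∑ j, f i j := by
  simp [Finset.mul_sum]

lemma sum2_delta (f : Fin n → Fin n → ℝ) :
    ∑ i, ∑ j, (if i = j then (1:ℝ) else 0) * f i j = ∑ i, f i i := by
  simp

lemma sum3_swap {n : ℕ} (f : Fin n → Fin n → Fin n → ℝ) :
    ∑ i, ∑ j, ∑ m, f i j m = ∑ m, ∑ i, ∑ j, f i j m := by
  calc ∑ i, ∑ j, ∑ m, f i j m = ∑ i, ∑ m, ∑ j, f i j m :=
        Finset.sum_congr rfl fun i _ => Finset.sum_comm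
    _ = ∑ m, ∑ i, ∑ j, f i j m := Finset.sum_comm

end helpers


set_option maxHeartbeats 2000000 in
/-- Let `u ∈ C³(Ω)` solve `∑ a_{ij}(∇u) ∂ᵢ∂ⱼ u = 0` where
`a_{ij}(p) = F'(|p|²)δ_{ij} + 2F''(|p|²)pᵢpⱼ` for a `C³` function `F`.  Then
`w x = ⟨∇u x, x⟩ - u x` satisfies `∑ a_{ij}(∇u) ∂ᵢ∂ⱼ w = ⟨b, ∇w⟩`, where
`b = -2{[F''(|∇u|²)Δu + 2F'''(|∇u|²)⟨D²u·∇u, ∇u⟩]∇u + 2F''(|∇u|²) D²u·∇u}`. -/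
theorem stmt15 {n : ℕ} {Ω : Set (EuclideanSpace ℝ (Fin n))} (hΩ : IsOpen Ω)
    {F : ℝ → ℝ} (hF : ContDiff ℝ 3 F)
    {u : EuclideanSpace ℝ (Fin n) → ℝ} (hu : ContDiffOn ℝ 3 u Ω)
    (a : EuclideanSpace ℝ (Fin n) → Fin n → Fin n → ℝ)
    (ha : ∀ p i j, a p i j
      = deriv F (‖p‖ ^ 2) * (if i = j then (1 : ℝ) else 0)
        + 2 * deriv (deriv F) (‖p‖ ^ 2) * p i * p j)
    (heq : ∀ x ∈ Ω, ∑ i : Fin n, ∑ j : Fin n, a (gradient u x) i j * pd2 i j u x = 0)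
    (b : EuclideanSpace ℝ (Fin n) → EuclideanSpace ℝ (Fin n))
    (hb : ∀ x, b x = (-2 : ℝ) •
      ((deriv (deriv F) (‖gradient u x‖ ^ 2) * lap u x
          + 2 * deriv (deriv (deriv F)) (‖gradient u x‖ ^ 2)
            * ⟪fderiv ℝ (gradient u) x (gradient u x), gradient u x⟫) • gradient u x
        + (2 * deriv (deriv F) (‖gradient u x‖ ^ 2))
            • fderiv ℝ (gradient u) x (gradient u x)))
    (w : EuclideanSpace ℝ (Fin n) → ℝ)
    (hw : ∀ x, w x = ⟪gradient u x, x⟫ - u x) :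
    ∀ x ∈ Ω, ∑ i : Fin n, ∑ j : Fin n, a (gradient u x) i j * pd2 i j w x
      = ⟪b x, gradient w x⟫ := by
  intro x hx
  -- regularity
  have hΩ3 : ∀ y ∈ Ω, ContDiffAt ℝ 3 u y := fun y hy => hu.contDiffAt (hΩ.mem_nhds hy)
  have hDu : ContDiffOn ℝ 2 (fderiv ℝ u) Ω := hu.fderiv_of_isOpen hΩ (by norm_num)
  have hpdC : ∀ i, ContDiffOn ℝ 2 (pd i u) Ω := fun i => hDu.clm_apply contDiffOn_const
  have hDpdC : ∀ i, ContDiffOn ℝ 1 (fderiv ℝ (pd i u)) Ω :=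
    fun i => (hpdC i).fderiv_of_isOpen hΩ (by norm_num)
  have hpd2C : ∀ i j, ContDiffOn ℝ 1 (pd2 i j u) Ω :=
    fun i j => (hDpdC j).clm_apply contDiffOn_const
  have hdpd : ∀ i, ∀ y ∈ Ω, DifferentiableAt ℝ (pd i u) y :=
    fun i y hy => ((hpdC i).contDiffAt (hΩ.mem_nhds hy)).differentiableAt two_ne_zero
  have hdpd2 : ∀ i j, ∀ y ∈ Ω, DifferentiableAt ℝ (pd2 i j u) y :=
    fun i j y hy => ((hpd2C i j).contDiffAt (hΩ.mem_nhds hy)).differentiableAt one_ne_zero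
  have hdDu : ∀ y ∈ Ω, DifferentiableAt ℝ (fderiv ℝ u) y :=
    fun y hy => (hDu.contDiffAt (hΩ.mem_nhds hy)).differentiableAt two_ne_zero
  have hDDu : ContDiffOn ℝ 1 (fderiv ℝ (fderiv ℝ u)) Ω := hDu.fderiv_of_isOpen hΩ (by norm_num)
  have hdDDu : ∀ y ∈ Ω, DifferentiableAt ℝ (fderiv ℝ (fderiv ℝ u)) y :=
    fun y hy => (hDDu.contDiffAt (hΩ.mem_nhds hy)).differentiableAt one_ne_zero
  -- second derivative representation and symmetry
  have hrep : ∀ j, ∀ y ∈ Ω, fderiv ℝ (pd j u) y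
      = (fderiv ℝ (fderiv ℝ u) y).flip (EuclideanSpace.single j 1) := by
    intro j y hy
    have h1 : pd j u = fun z => (fderiv ℝ u z) (EuclideanSpace.single j 1) := rfl
    rw [h1, fderiv_clm_apply (hdDu y hy) (differentiableAt_const _)]
    simp
  have hpd2rep : ∀ i j, ∀ y ∈ Ω, pd2 i j u y
      = fderiv ℝ (fderiv ℝ u) y (EuclideanSpace.single i 1) (EuclideanSpace.single j 1) := by
    intro i j y hy
    show fderiv ℝ (pd j u) y (EuclideanSpace.single i 1) = _
    rw [hrep j y hy]; simp
  have hsym : ∀ y ∈ Ω, ∀ i j, pd2 i j u y = pd2 j i u y := by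
    intro y hy i j
    rw [hpd2rep i j y hy, hpd2rep j i y hy]
    exact ((hΩ3 y hy).isSymmSndFDerivAt (by norm_num)) _ _
  -- third derivative representation
  have ht : ∀ i j m, fderiv ℝ (pd2 i j u) x (EuclideanSpace.single m 1)
      = fderiv ℝ (fderiv ℝ (fderiv ℝ u)) x (EuclideanSpace.single m 1)
          (EuclideanSpace.single i 1) (EuclideanSpace.single j 1) := by
    intro i j m
    have hev : pd2 i j u =ᶠ[nhds x] fun y =>
        fderiv ℝ (fderiv ℝ u) y (EuclideanSpace.single i 1) (EuclideanSpace.single j 1) := by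
      filter_upwards [hΩ.mem_nhds hx] with y hy using hpd2rep i j y hy
    rw [hev.fderiv_eq]
    have hc : DifferentiableAt ℝ (fun y => fderiv ℝ (fderiv ℝ u) y (EuclideanSpace.single i 1)) x :=
      (hdDDu x hx).clm_apply (differentiableAt_const _)
    rw [fderiv_clm_apply hc (differentiableAt_const _)]
    rw [fderiv_clm_apply (hdDDu x hx) (differentiableAt_const _)]
    simp
  have hT12 : ∀ v v' : EuclideanSpace ℝ (Fin n),
      fderiv ℝ (fderiv ℝ (fderiv ℝ u)) x v v' = fderiv ℝ (fderiv ℝ (fderiv ℝ u)) x v' v :=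
    (hDu.contDiffAt (hΩ.mem_nhds hx)).isSymmSndFDerivAt (by norm_num)
  have hT23 : ∀ m i j, fderiv ℝ (fderiv ℝ (fderiv ℝ u)) x (EuclideanSpace.single m 1)
        (EuclideanSpace.single i 1) (EuclideanSpace.single j 1)
      = fderiv ℝ (fderiv ℝ (fderiv ℝ u)) x (EuclideanSpace.single m 1)
        (EuclideanSpace.single j 1) (EuclideanSpace.single i 1) := by
    intro m i j
    have hev : pd2 i j u =ᶠ[nhds x] pd2 j i u := by
      filter_upwards [hΩ.mem_nhds hx] with y hy using hsym y hy i j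
    have := congrFun (congrArg (fun (L : EuclideanSpace ℝ (Fin n) →L[ℝ] ℝ) => (L : _ → ℝ))
      hev.fderiv_eq) (EuclideanSpace.single m 1)
    simpa [ht i j m, ht j i m] using this
  have hcyc : ∀ i j m, fderiv ℝ (fderiv ℝ (fderiv ℝ u)) x (EuclideanSpace.single i 1)
        (EuclideanSpace.single j 1) (EuclideanSpace.single m 1)
      = fderiv ℝ (pd2 i j u) x (EuclideanSpace.single m 1) := by
    intro i j m
    rw [ht i j m, hT23 i j m, hT12 (EuclideanSpace.single i 1) (EuclideanSpace.single m 1)]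
  -- derivatives of w
  have hwfun : w = fun y => fderiv ℝ u y y - u y := funext fun y => by rw [hw y, inner_grad]
  have hwF : ∀ y ∈ Ω, HasFDerivAt w
      (((fderiv ℝ u y).comp (ContinuousLinearMap.id ℝ _)
        + (fderiv ℝ (fderiv ℝ u) y).flip y) - fderiv ℝ u y) y := by
    intro y hy
    rw [hwfun]
    exact ((hdDu y hy).hasFDerivAt.clm_apply (hasFDerivAt_id y)).sub
      (((hΩ3 y hy).differentiableAt (by norm_num)).hasFDerivAt)
  have hpdw : ∀ m, ∀ y ∈ Ω, pd m w y
      = fderiv ℝ (fderiv ℝ u) y (EuclideanSpace.single m 1) y := by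
    intro m y hy
    show fderiv ℝ w y (EuclideanSpace.single m 1) = _
    rw [(hwF y hy).fderiv]
    simp
  have hgw : ∀ m, gradient w x m = ∑ k, x k * pd2 m k u x := by
    intro m
    rw [grad_comp, hpdw m x hx, apply_eq_sum]
    exact Finset.sum_congr rfl fun k _ => by rw [← hpd2rep m k x hx]
  have hpd2w : ∀ i j, pd2 i j w x = pd2 j i u x
      + ∑ m, x m * fderiv ℝ (pd2 i j u) x (EuclideanSpace.single m 1) := by
    intro i j
    have hev : pd j w =ᶠ[nhds x] fun y =>
        (fderiv ℝ (fderiv ℝ u) y (EuclideanSpace.single j 1)) y := by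
      filter_upwards [hΩ.mem_nhds hx] with y hy using hpdw j y hy
    have hcd : DifferentiableAt ℝ (fun y => fderiv ℝ (fderiv ℝ u) y (EuclideanSpace.single j 1)) x :=
      (hdDDu x hx).clm_apply (differentiableAt_const _)
    have h2 : fderiv ℝ (fun y => fderiv ℝ (fderiv ℝ u) y (EuclideanSpace.single j 1)) x
        = (fderiv ℝ (fderiv ℝ (fderiv ℝ u)) x).flip (EuclideanSpace.single j 1) := by
      rw [fderiv_clm_apply (hdDDu x hx) (differentiableAt_const _)]; simp
    show fderiv ℝ (pd j w) x (EuclideanSpace.single i 1) = _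
    rw [hev.fderiv_eq, fderiv_clm_apply hcd differentiableAt_fun_id, h2]
    simp only [ContinuousLinearMap.add_apply, ContinuousLinearMap.coe_comp',
      Function.comp_apply, fderiv_id', ContinuousLinearMap.coe_id', id_eq,
      ContinuousLinearMap.flip_apply]
    rw [apply_eq_sum (fderiv ℝ (fderiv ℝ (fderiv ℝ u)) x (EuclideanSpace.single i 1)
      (EuclideanSpace.single j 1)) x, ← hpd2rep j i x hx]
    congr 1
    exact Finset.sum_congr rfl fun m _ => by rw [hcyc i j m]
  -- the differentiated equation
  have hnorm : ∀ y, ‖gradient u y‖^2 = ∑ l, pd l u y * pd l u y := normsq_eq u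
  have hΦ0 : (fun y => (∑ i, ∑ j, ((deriv F (∑ l, pd l u y * pd l u y)) * (if i = j then (1:ℝ) else 0)
        + 2 * deriv (deriv F) (∑ l, pd l u y * pd l u y) * pd i u y * pd j u y) * pd2 i j u y))
        =ᶠ[nhds x] fun _ => (0:ℝ) := by
    filter_upwards [hΩ.mem_nhds hx] with y hy
    have hY : (∑ i, ∑ j, ((deriv F (∑ l, pd l u y * pd l u y)) * (if i = j then (1:ℝ) else 0)
        + 2 * deriv (deriv F) (∑ l, pd l u y * pd l u y) * pd i u y * pd j u y) * pd2 i j u y)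
        = ∑ i : Fin n, ∑ j : Fin n, a (gradient u y) i j * pd2 i j u y :=
      Finset.sum_congr rfl fun i _ => Finset.sum_congr rfl fun j _ => by
        rw [ha, hnorm, grad_comp, grad_comp]
    rw [hY, heq y hy]
  have hF' : ContDiff ℝ 2 (deriv F) := by
    have h3 : ContDiff ℝ ((2:ℕ)+1) F := by exact_mod_cast hF
    exact (contDiff_succ_iff_deriv.mp h3).2.2
  have hF'' : ContDiff ℝ 1 (deriv (deriv F)) := by
    have h3 : ContDiff ℝ ((1:ℕ)+1) (deriv F) := by exact_mod_cast hF'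
    exact (contDiff_succ_iff_deriv.mp h3).2.2
  have hQF : HasFDerivAt (fun y => ∑ l, pd l u y * pd l u y)
      (∑ l, (pd l u x • fderiv ℝ (pd l u) x + pd l u x • fderiv ℝ (pd l u) x)) x :=
    HasFDerivAt.fun_sum fun l _ => ((hdpd l x hx).hasFDerivAt.fun_mul (hdpd l x hx).hasFDerivAt)
  have hF1 : HasFDerivAt (fun y => deriv F (∑ l, pd l u y * pd l u y))
      (deriv (deriv F) (∑ l, pd l u x * pd l u x)
        • (∑ l, (pd l u x • fderiv ℝ (pd l u) x + pd l u x • fderiv ℝ (pd l u) x))) x :=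
    HasDerivAt.comp_hasFDerivAt x ((hF'.differentiable two_ne_zero _).hasDerivAt) hQF
  have hF2 : HasFDerivAt (fun y => deriv (deriv F) (∑ l, pd l u y * pd l u y))
      (deriv (deriv (deriv F)) (∑ l, pd l u x * pd l u x)
        • (∑ l, (pd l u x • fderiv ℝ (pd l u) x + pd l u x • fderiv ℝ (pd l u) x))) x :=
    HasDerivAt.comp_hasFDerivAt x ((hF''.differentiable one_ne_zero _).hasDerivAt) hQF
  have hΦF := HasFDerivAt.fun_sum (fun i (_ : i ∈ Finset.univ) => HasFDerivAt.fun_sum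
    (fun j (_ : j ∈ Finset.univ) =>
      (((hF1.mul_const (if i = j then (1:ℝ) else 0)).fun_add
        (((hF2.const_mul 2).fun_mul (hdpd i x hx).hasFDerivAt).fun_mul (hdpd j x hx).hasFDerivAt)).fun_mul
        (hdpd2 i j x hx).hasFDerivAt)))
  have hfz : fderiv ℝ (fun y => (∑ i, ∑ j, ((deriv F (∑ l, pd l u y * pd l u y))
        * (if i = j then (1:ℝ) else 0)
        + 2 * deriv (deriv F) (∑ l, pd l u y * pd l u y) * pd i u y * pd j u y)
        * pd2 i j u y)) x = 0 := by
    rw [hΦ0.fderiv_eq]; simp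
  have hpdrfl : ∀ k l, fderiv ℝ (pd l u) x (EuclideanSpace.single k 1) = pd2 k l u x :=
    fun _ _ => rfl
  have deq : ∀ k, ∑ i : Fin n, ∑ j : Fin n,
      (((deriv F (∑ l, pd l u x * pd l u x) * if i = j then (1:ℝ) else 0) +
            2 * deriv (deriv F) (∑ l, pd l u x * pd l u x) * pd i u x * pd j u x) *
          (fderiv ℝ (pd2 i j u) x) (EuclideanSpace.single k 1) +
        pd2 i j u x *
          ((if i = j then (1:ℝ) else 0) *
              (deriv (deriv F) (∑ l, pd l u x * pd l u x) *
                ∑ l, (pd l u x * pd2 k l u x + pd l u x * pd2 k l u x)) +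
            (2 * deriv (deriv F) (∑ l, pd l u x * pd l u x) * pd i u x * pd2 k j u x +
              pd j u x *
                (2 * deriv (deriv F) (∑ l, pd l u x * pd l u x) * pd2 k i u x +
                  pd i u x *
                    (2 *
                      (deriv (deriv (deriv F)) (∑ l, pd l u x * pd l u x) *
                        ∑ l, (pd l u x * pd2 k l u x + pd l u x * pd2 k l u x))))))) = 0 := by
    intro k
    have h0 := ContinuousLinearMap.ext_iff.mp (hΦF.fderiv.symm.trans hfz) (EuclideanSpace.single k 1)
    simp only [ContinuousLinearMap.add_apply, ContinuousLinearMap.coe_sum', Finset.sum_apply,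
      ContinuousLinearMap.coe_smul', Pi.smul_apply, smul_eq_mul, ContinuousLinearMap.zero_apply,
      Pi.zero_apply, hpdrfl] at h0
    exact h0
  -- symmetric pd2 at x
  have hsx : ∀ i j, pd2 i j u x = pd2 j i u x := hsym x hx
  have hA : ∀ i j, a (gradient u x) i j = ((deriv F (∑ l, pd l u x * pd l u x) * if i = j then (1:ℝ) else 0) + 2 * deriv (deriv F) (∑ l, pd l u x * pd l u x) * pd i u x * pd j u x) :=
    fun i j => by rw [ha, hnorm, grad_comp, grad_comp]
  have heq0 : (∑ i : Fin n, ∑ j : Fin n, (((deriv F (∑ l, pd l u x * pd l u x) * if i = j then (1:ℝ) else 0) + 2 * deriv (deriv F) (∑ l, pd l u x * pd l u x) * pd i u x * pd j u x) * pd2 j i u x)) = 0 := by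
    have hY : (∑ i : Fin n, ∑ j : Fin n, (((deriv F (∑ l, pd l u x * pd l u x) * if i = j then (1:ℝ) else 0) + 2 * deriv (deriv F) (∑ l, pd l u x * pd l u x) * pd i u x * pd j u x) * pd2 j i u x))
        = ∑ i : Fin n, ∑ j : Fin n, a (gradient u x) i j * pd2 i j u x :=
      Finset.sum_congr rfl fun i _ => Finset.sum_congr rfl fun j _ => by
        rw [hA, hsx j i]
    rw [hY, heq x hx]
  -- components of b
  have hbm : ∀ m, b x m
      = -2 * ((deriv (deriv F) (∑ l, pd l u x * pd l u x) * (∑ i, pd2 i i u x) + 2 * deriv (deriv (deriv F)) (∑ l, pd l u x * pd l u x) * (∑ l, (∑ r, pd r u x * pd2 r l u x) * pd l u x)) * pd m u x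
        + 2 * deriv (deriv F) (∑ l, pd l u x * pd l u x) * (∑ r, pd r u x * pd2 r m u x)) := by
    intro m
    have hlap : lap u x = ∑ i, pd2 i i u x := rfl
    have hin : ⟪fderiv ℝ (gradient u) x (gradient u x), gradient u x⟫
        = (∑ l, (∑ r, pd r u x * pd2 r l u x) * pd l u x) := by
      rw [inner_sum']
      refine Finset.sum_congr rfl fun l _ => ?_
      rw [fderiv_gradient_apply (fun i => hdpd i x hx),
        apply_eq_sum (fderiv ℝ (pd l u) x) (gradient u x), grad_comp]
      congr 1
      exact Finset.sum_congr rfl fun r _ => by rw [grad_comp, hpdrfl]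
    have hDm : (fderiv ℝ (gradient u) x (gradient u x)) m
        = ∑ r, pd r u x * pd2 r m u x := by
      rw [fderiv_gradient_apply (fun i => hdpd i x hx),
        apply_eq_sum (fderiv ℝ (pd m u) x) (gradient u x)]
      exact Finset.sum_congr rfl fun r _ => by rw [grad_comp, hpdrfl]
    rw [hb]
    simp only [PiLp.smul_apply, PiLp.add_apply, smul_eq_mul]
    rw [hin, hDm, hlap, hnorm, grad_comp]
  -- the key identity
  have key : ∀ k : Fin n, (∑ i : Fin n, ∑ j : Fin n,
      (((deriv F (∑ l, pd l u x * pd l u x) * if i = j then (1:ℝ) else 0) + 2 * deriv (deriv F) (∑ l, pd l u x * pd l u x) * pd i u x * pd j u x) * (fderiv ℝ (pd2 i j u) x) (EuclideanSpace.single k 1)))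
      = ∑ m, b x m * pd2 m k u x := by
    intro k
    have d := deq k
    rw [sum2_add] at d
    have hS : (∑ l, (pd l u x * pd2 k l u x + pd l u x * pd2 k l u x))
        = 2 * (∑ l, pd l u x * pd2 k l u x) := by
      rw [Finset.sum_add_distrib]; ring
    have hZ1 : (∑ i : Fin n, ∑ j : Fin n, pd i u x * pd2 i j u x * pd2 k j u x) = (∑ i, ∑ j, pd i u x * pd2 i j u x * pd2 j k u x) :=
      Finset.sum_congr rfl fun i _ => Finset.sum_congr rfl fun j _ => by rw [hsx k j]
    have hZ2 : (∑ i : Fin n, ∑ j : Fin n, pd j u x * pd2 i j u x * pd2 k i u x) = (∑ i, ∑ j, pd i u x * pd2 i j u x * pd2 j k u x) := by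
      calc (∑ i : Fin n, ∑ j : Fin n, pd j u x * pd2 i j u x * pd2 k i u x)
          = ∑ i : Fin n, ∑ j : Fin n, pd j u x * pd2 j i u x * pd2 i k u x :=
            Finset.sum_congr rfl fun i _ => Finset.sum_congr rfl fun j _ => by
              rw [hsx i j, hsx k i]
        _ = (∑ i, ∑ j, pd i u x * pd2 i j u x * pd2 j k u x) := Finset.sum_comm
    have eL : (∑ i : Fin n, ∑ j : Fin n, pd2 i j u x * ((if i = j then (1:ℝ) else 0) * (deriv (deriv F) (∑ l, pd l u x * pd l u x) * ∑ l, (pd l u x * pd2 k l u x + pd l u x * pd2 k l u x)) + (2 * deriv (deriv F) (∑ l, pd l u x * pd l u x) * pd i u x * pd2 k j u x + pd j u x * (2 * deriv (deriv F) (∑ l, pd l u x * pd l u x) * pd2 k i u x + pd i u x * (2 * (deriv (deriv (deriv F)) (∑ l, pd l u x * pd l u x) * ∑ l, (pd l u x * pd2 k l u x + pd l u x * pd2 k l u x)))))))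
        = 2 * deriv (deriv F) (∑ l, pd l u x * pd l u x) * (∑ l, pd l u x * pd2 k l u x) * (∑ i, pd2 i i u x) + (2 * deriv (deriv F) (∑ l, pd l u x * pd l u x) * (∑ i, ∑ j, pd i u x * pd2 i j u x * pd2 j k u x) + (2 * deriv (deriv F) (∑ l, pd l u x * pd l u x) * (∑ i, ∑ j, pd i u x * pd2 i j u x * pd2 j k u x)
          + 4 * deriv (deriv (deriv F)) (∑ l, pd l u x * pd l u x) * (∑ l, pd l u x * pd2 k l u x) * (∑ i, ∑ j, pd i u x * pd j u x * pd2 i j u x))) := by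
      have e1 : (∑ i : Fin n, ∑ j : Fin n, pd2 i j u x * ((if i = j then (1:ℝ) else 0) * (deriv (deriv F) (∑ l, pd l u x * pd l u x) * ∑ l, (pd l u x * pd2 k l u x + pd l u x * pd2 k l u x)) + (2 * deriv (deriv F) (∑ l, pd l u x * pd l u x) * pd i u x * pd2 k j u x + pd j u x * (2 * deriv (deriv F) (∑ l, pd l u x * pd l u x) * pd2 k i u x + pd i u x * (2 * (deriv (deriv (deriv F)) (∑ l, pd l u x * pd l u x) * ∑ l, (pd l u x * pd2 k l u x + pd l u x * pd2 k l u x)))))))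
          = ∑ i : Fin n, ∑ j : Fin n, ((2 * deriv (deriv F) (∑ l, pd l u x * pd l u x) * (∑ l, pd l u x * pd2 k l u x)) * ((if i = j then (1:ℝ) else 0) * pd2 i j u x)
            + ((2 * deriv (deriv F) (∑ l, pd l u x * pd l u x)) * (pd i u x * pd2 i j u x * pd2 k j u x)
            + ((2 * deriv (deriv F) (∑ l, pd l u x * pd l u x)) * (pd j u x * pd2 i j u x * pd2 k i u x)
            + (4 * deriv (deriv (deriv F)) (∑ l, pd l u x * pd l u x) * (∑ l, pd l u x * pd2 k l u x)) * (pd i u x * pd j u x * pd2 i j u x)))) :=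
        Finset.sum_congr rfl fun i _ => Finset.sum_congr rfl fun j _ => by
          rw [hS]; ring
      rw [e1, sum2_add, sum2_add, sum2_add, sum2_cmul, sum2_cmul, sum2_cmul, sum2_cmul,
        sum2_delta, hZ1, hZ2]
    have hI : (∑ l, (∑ r, pd r u x * pd2 r l u x) * pd l u x) = (∑ i, ∑ j, pd i u x * pd j u x * pd2 i j u x) := by
      calc (∑ l, (∑ r, pd r u x * pd2 r l u x) * pd l u x) = ∑ l : Fin n, ∑ r : Fin n, pd r u x * pd2 r l u x * pd l u x :=
            Finset.sum_congr rfl fun l _ => Finset.sum_mul _ _ _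
        _ = ∑ r : Fin n, ∑ l : Fin n, pd r u x * pd2 r l u x * pd l u x := Finset.sum_comm
        _ = (∑ i, ∑ j, pd i u x * pd j u x * pd2 i j u x) := Finset.sum_congr rfl fun r _ => Finset.sum_congr rfl fun l' _ => by ring
    have hW' : (∑ m, pd m u x * pd2 m k u x) = (∑ l, pd l u x * pd2 k l u x) :=
      Finset.sum_congr rfl fun m _ => by rw [hsx m k]
    have hZ3 : (∑ m, (∑ r, pd r u x * pd2 r m u x) * pd2 m k u x) = (∑ i, ∑ j, pd i u x * pd2 i j u x * pd2 j k u x) := by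
      calc (∑ m, (∑ r, pd r u x * pd2 r m u x) * pd2 m k u x)
          = ∑ m : Fin n, ∑ r : Fin n, pd r u x * pd2 r m u x * pd2 m k u x :=
            Finset.sum_congr rfl fun m _ => Finset.sum_mul _ _ _
        _ = (∑ i, ∑ j, pd i u x * pd2 i j u x * pd2 j k u x) := Finset.sum_comm
    have eR : (∑ m, b x m * pd2 m k u x)
        = -(2 * deriv (deriv F) (∑ l, pd l u x * pd l u x) * (∑ l, pd l u x * pd2 k l u x) * (∑ i, pd2 i i u x) + (2 * deriv (deriv F) (∑ l, pd l u x * pd l u x) * (∑ i, ∑ j, pd i u x * pd2 i j u x * pd2 j k u x) + (2 * deriv (deriv F) (∑ l, pd l u x * pd l u x) * (∑ i, ∑ j, pd i u x * pd2 i j u x * pd2 j k u x)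
          + 4 * deriv (deriv (deriv F)) (∑ l, pd l u x * pd l u x) * (∑ l, pd l u x * pd2 k l u x) * (∑ i, ∑ j, pd i u x * pd j u x * pd2 i j u x)))) := by
      have e2 : (∑ m, b x m * pd2 m k u x)
          = ∑ m, ((-2 * (deriv (deriv F) (∑ l, pd l u x * pd l u x) * (∑ i, pd2 i i u x) + 2 * deriv (deriv (deriv F)) (∑ l, pd l u x * pd l u x) * (∑ l, (∑ r, pd r u x * pd2 r l u x) * pd l u x))) * (pd m u x * pd2 m k u x)
            + (-(4 * deriv (deriv F) (∑ l, pd l u x * pd l u x))) * ((∑ r, pd r u x * pd2 r m u x) * pd2 m k u x)) :=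
        Finset.sum_congr rfl fun m _ => by rw [hbm m]; ring
      rw [e2, Finset.sum_add_distrib, ← Finset.mul_sum, ← Finset.mul_sum, hW', hZ3, hI]
      ring
    linarith [d, eL, eR]
  -- assemble
  rw [inner_sum']
  calc ∑ i : Fin n, ∑ j : Fin n, a (gradient u x) i j * pd2 i j w x
      = ∑ i : Fin n, ∑ j : Fin n, ((((deriv F (∑ l, pd l u x * pd l u x) * if i = j then (1:ℝ) else 0) + 2 * deriv (deriv F) (∑ l, pd l u x * pd l u x) * pd i u x * pd j u x) * pd2 j i u x)
        + ∑ m, x m * (((deriv F (∑ l, pd l u x * pd l u x) * if i = j then (1:ℝ) else 0) + 2 * deriv (deriv F) (∑ l, pd l u x * pd l u x) * pd i u x * pd j u x)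
          * (fderiv ℝ (pd2 i j u) x) (EuclideanSpace.single m 1))) := by
        refine Finset.sum_congr rfl fun i _ => Finset.sum_congr rfl fun j _ => ?_
        rw [hA i j, hpd2w i j, mul_add, Finset.mul_sum]
        congr 1
        exact Finset.sum_congr rfl fun m _ => by ring
    _ = (∑ i : Fin n, ∑ j : Fin n, (((deriv F (∑ l, pd l u x * pd l u x) * if i = j then (1:ℝ) else 0) + 2 * deriv (deriv F) (∑ l, pd l u x * pd l u x) * pd i u x * pd j u x) * pd2 j i u x))
        + ∑ i : Fin n, ∑ j : Fin n, ∑ m, x m * (((deriv F (∑ l, pd l u x * pd l u x) * if i = j then (1:ℝ) else 0) + 2 * deriv (deriv F) (∑ l, pd l u x * pd l u x) * pd i u x * pd j u x)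
          * (fderiv ℝ (pd2 i j u) x) (EuclideanSpace.single m 1)) := sum2_add _ _
    _ = ∑ i : Fin n, ∑ j : Fin n, ∑ m, x m * (((deriv F (∑ l, pd l u x * pd l u x) * if i = j then (1:ℝ) else 0) + 2 * deriv (deriv F) (∑ l, pd l u x * pd l u x) * pd i u x * pd j u x)
          * (fderiv ℝ (pd2 i j u) x) (EuclideanSpace.single m 1)) := by
        rw [heq0, zero_add]
    _ = ∑ m, ∑ i : Fin n, ∑ j : Fin n, x m * (((deriv F (∑ l, pd l u x * pd l u x) * if i = j then (1:ℝ) else 0) + 2 * deriv (deriv F) (∑ l, pd l u x * pd l u x) * pd i u x * pd j u x)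
          * (fderiv ℝ (pd2 i j u) x) (EuclideanSpace.single m 1)) := sum3_swap _
    _ = ∑ m, x m * ∑ i : Fin n, ∑ j : Fin n, (((deriv F (∑ l, pd l u x * pd l u x) * if i = j then (1:ℝ) else 0) + 2 * deriv (deriv F) (∑ l, pd l u x * pd l u x) * pd i u x * pd j u x)
          * (fderiv ℝ (pd2 i j u) x) (EuclideanSpace.single m 1)) :=
        Finset.sum_congr rfl fun m _ => sum2_cmul _ _
    _ = ∑ m, x m * ∑ k, b x k * pd2 k m u x :=
        Finset.sum_congr rfl fun m _ => by rw [key m]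
    _ = ∑ m, b x m * gradient w x m := by
        calc ∑ m, x m * ∑ k, b x k * pd2 k m u x
            = ∑ m : Fin n, ∑ k : Fin n, x m * (b x k * pd2 k m u x) :=
              Finset.sum_congr rfl fun m _ => Finset.mul_sum _ _ _
          _ = ∑ k : Fin n, ∑ m : Fin n, x m * (b x k * pd2 k m u x) := Finset.sum_comm
          _ = ∑ m, b x m * gradient w x m := by
              refine Finset.sum_congr rfl fun k _ => ?_
              rw [hgw k, Finset.mul_sum]
              exact Finset.sum_congr rfl fun m _ => by ring
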